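/- arXiv:1710.05071 — 3 statements merged into one kernel-verified Lean document; each statement's English description precedes it below -/
import Mathlib

section
/- Let a ∈ ℂ with 2·Im(a)² − Re(a)² − 2 > 0. Then the cubic polynomial f_a' has exactly one real root, and this root lies in the open interval (−1, 1). -/
open Complex

noncomputable def fA (a z : ℂ) : ℂ := (z - 1) * (z + 1) * (z - a) * (z - starRingEnd ℂ a)

/-- If `2 Im(a)² − Re(a)² − 2 > 0`, then the cubic `f_a'` has exactly one real root,
which lies in `(-1, 1)`. -/
theorem fA_deriv_unique_real_root (a : ℂ)
    (ha : 2 * a.im ^ 2 - a.re ^ 2 - 2 > 0) :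
    ∃ x : ℝ, x ∈ Set.Ioo (-1 : ℝ) 1 ∧ deriv (fA a) (x : ℂ) = 0 ∧
      ∀ y : ℝ, deriv (fA a) (y : ℂ) = 0 → y = x := by
  set g : ℝ → ℝ := fun y =>
    4 * y ^ 3 - 6 * a.re * y ^ 2 + 2 * (Complex.normSq a - 1) * y + 2 * a.re with hg
  have hder : ∀ z : ℂ, HasDerivAt (fA a)
      (4 * z ^ 3 - 3 * (a + starRingEnd ℂ a) * z ^ 2
        + 2 * (a * starRingEnd ℂ a - 1) * z + (a + starRingEnd ℂ a)) z := by
    intro z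
    have h1 : HasDerivAt (fun z : ℂ => z - 1) 1 z := (hasDerivAt_id z).sub_const 1
    have h2 : HasDerivAt (fun z : ℂ => z + 1) 1 z := (hasDerivAt_id z).add_const 1
    have h3 : HasDerivAt (fun z : ℂ => z - a) 1 z := (hasDerivAt_id z).sub_const a
    have h4 : HasDerivAt (fun z : ℂ => z - starRingEnd ℂ a) 1 z :=
      (hasDerivAt_id z).sub_const _
    have h : HasDerivAt (fA a) _ z := ((h1.mul h2).mul h3).mul h4
    convert h using 1
    simp only [Pi.mul_apply]
    ring
  have hderiv : ∀ y : ℝ, deriv (fA a) (y : ℂ) = ((g y : ℝ) : ℂ) := by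
    intro y
    rw [(hder (y : ℂ)).deriv]
    have h1 : a + starRingEnd ℂ a = ((2 * a.re : ℝ) : ℂ) := by
      rw [Complex.add_conj]
    have h2 : a * starRingEnd ℂ a = ((Complex.normSq a : ℝ) : ℂ) := Complex.mul_conj a
    rw [h1, h2]
    simp only [hg]
    push_cast
    ring
  have hzero : ∀ y : ℝ, deriv (fA a) (y : ℂ) = 0 ↔ g y = 0 := by
    intro y
    rw [hderiv y]
    exact_mod_cast Iff.rfl
  have hnsq : Complex.normSq a = a.re ^ 2 + a.im ^ 2 := by
    rw [Complex.normSq_apply]; ring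
  -- g(-1) < 0 < g(1)
  have hneg : g (-1) < 0 := by
    simp only [hg, hnsq]; nlinarith [sq_nonneg (a.re + 1), sq_nonneg a.re]
  have hpos : g 1 > 0 := by
    simp only [hg, hnsq]; nlinarith [sq_nonneg (a.re - 1), sq_nonneg a.re]
  -- existence via IVT
  have hcont : ContinuousOn g (Set.Icc (-1 : ℝ) 1) := by
    apply Continuous.continuousOn; simp only [hg]; continuity
  have hivt := intermediate_value_Ioo (by norm_num : (-1 : ℝ) ≤ 1) hcont
  have h0 : (0 : ℝ) ∈ Set.Ioo (g (-1)) (g 1) := ⟨hneg, hpos⟩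
  obtain ⟨x, hx, hgx⟩ := hivt h0
  -- uniqueness: if g x = g y = 0 then x = y
  have huniq : ∀ u v : ℝ, g u = 0 → g v = 0 → u = v := by
    intro u v hu hv
    by_contra hne
    have hdiff : g v - g u = (v - u) *
        (4 * (v ^ 2 + v * u + u ^ 2) - 6 * a.re * (v + u) + 2 * (Complex.normSq a - 1)) := by
      simp only [hg]; ring
    have hQ : 4 * (v ^ 2 + v * u + u ^ 2) - 6 * a.re * (v + u)
        + 2 * (Complex.normSq a - 1) > 0 := by
      rw [hnsq]
      nlinarith [sq_nonneg (u + v - a.re), sq_nonneg (u - v)]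
    have hprod : (v - u) *
        (4 * (v ^ 2 + v * u + u ^ 2) - 6 * a.re * (v + u) + 2 * (Complex.normSq a - 1)) = 0 := by
      rw [← hdiff, hu, hv]; ring
    have hvu : v - u ≠ 0 := sub_ne_zero.mpr (Ne.symm hne)
    rcases mul_eq_zero.mp hprod with h | h
    · exact hvu h
    · exact (ne_of_gt hQ) h
  exact ⟨x, hx, (hzero x).mpr hgx, fun y hy => huniq y x ((hzero y).mp hy) hgx⟩
end

section
/- Let q ∈ ℂ and define f_q(z) = z²(q − z)/(1 + q̄·z) and η(z) = −1/conj(z). Then for every z ∈ ℂ with z ≠ 0, 1 + q̄·z ≠ 0, conj(z) − q̄ ≠ 0, and f_q(z) ≠ 0, one has f_q(η(z)) = η(f_q(z)); i.e., f_q commutes with the antipodal map. -/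
open Complex

noncomputable def fq (q z : ℂ) : ℂ := z ^ 2 * (q - z) / (1 + starRingEnd ℂ q * z)

noncomputable def antipodal (z : ℂ) : ℂ := -1 / starRingEnd ℂ z

/-- `f_q` commutes with the antipodal map `η(z) = -1/conj z`. -/
theorem fq_commutes_antipodal (q z : ℂ) (hz : z ≠ 0)
    (hden : 1 + starRingEnd ℂ q * z ≠ 0)
    (hq : starRingEnd ℂ z - starRingEnd ℂ q ≠ 0)
    (hfz : fq q z ≠ 0) :
    fq q (antipodal z) = antipodal (fq q z) := by
  have hz' : starRingEnd ℂ z ≠ 0 := by simpa using hz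
  have hfz' : starRingEnd ℂ (fq q z) ≠ 0 := by simpa using hfz
  have hden' : 1 + q * starRingEnd ℂ z ≠ 0 := by
    intro h; apply hden
    have := congrArg (starRingEnd ℂ) h
    simpa [mul_comm] using this
  unfold fq antipodal at *
  rw [map_div₀] at hfz' ⊢
  simp only [map_add, map_mul, map_one, map_sub, map_pow, RingHom.id_apply, Complex.conj_conj] at hfz' ⊢
  have h2 : 1 + starRingEnd ℂ q * (-1 / starRingEnd ℂ z) = (starRingEnd ℂ z - starRingEnd ℂ q) / starRingEnd ℂ z := by
    field_simp
    ring
  rw [h2]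
  have h3 : starRingEnd ℂ z ^ 2 * starRingEnd ℂ q - starRingEnd ℂ z ^ 3 ≠ 0 := by
    intro h; apply hq
    have : starRingEnd ℂ z ^ 2 * (starRingEnd ℂ q - starRingEnd ℂ z) = 0 := by linear_combination h
    rcases mul_eq_zero.1 this with h' | h'
    · exact absurd (pow_eq_zero_iff (by norm_num) |>.1 h') hz'
    · linear_combination -h'
  rw [div_eq_div_iff (div_ne_zero hq hz') hfz']
  have hden'' : 1 + starRingEnd ℂ z * q ≠ 0 := by rwa [mul_comm]
  field_simp
  ring
end

section
/- Let h be a complex-differentiable function in a neighborhood of z₀ ∈ ℂ with h(z₀) fixed in the following sense: define g(z) = conj(h(z)) and suppose g(z₀) = z₀. Then g∘g is complex-differentiable at z₀ and its derivative there equals |h'(z₀)|². In particular, this derivative is a nonnegative real number, and if it has modulus 1 then it equals exactly 1. -/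
open Complex

lemma conj_conj_hasDerivAt {h : ℂ → ℂ} {c w : ℂ}
    (H : HasDerivAt h c (starRingEnd ℂ w)) :
    HasDerivAt (fun z => starRingEnd ℂ (h (starRingEnd ℂ z))) (starRingEnd ℂ c) w := by
  rw [hasDerivAt_iff_isLittleO] at H ⊢
  have ht : Filter.Tendsto (fun z : ℂ => starRingEnd ℂ z) (nhds w)
      (nhds (starRingEnd ℂ w)) := (Complex.continuous_conj).continuousAt
  have H2 := H.comp_tendsto ht
  rw [← Asymptotics.isLittleO_norm_norm] at H2 ⊢
  convert H2 using 2 with z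
  · simp only [Function.comp]
    rw [show starRingEnd ℂ (h (starRingEnd ℂ z)) - starRingEnd ℂ (h (starRingEnd ℂ w))
        - (z - w) • starRingEnd ℂ c
        = starRingEnd ℂ (h (starRingEnd ℂ z) - h (starRingEnd ℂ w)
          - (starRingEnd ℂ z - starRingEnd ℂ w) • c) by
      simp only [map_sub, smul_eq_mul, map_mul, Complex.conj_conj]]
    exact (RCLike.norm_conj _)
  · simp only [Function.comp]
    rw [← map_sub, RCLike.norm_conj]

/-- The second iterate of an antiholomorphic map `g = conj ∘ h` at a fixed point `z₀` is
holomorphic with derivative `|h'(z₀)|²`, a nonnegative real; if its modulus is `1` it equals `1`. -/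
theorem antiholomorphic_second_iterate_deriv (h : ℂ → ℂ) (z₀ : ℂ)
    (hdiff : ∀ᶠ z in nhds z₀, DifferentiableAt ℂ h z)
    (hfix : starRingEnd ℂ (h z₀) = z₀) :
    DifferentiableAt ℂ ((fun z => starRingEnd ℂ (h z)) ∘ (fun z => starRingEnd ℂ (h z))) z₀ ∧
    deriv ((fun z => starRingEnd ℂ (h z)) ∘ (fun z => starRingEnd ℂ (h z))) z₀ =
      ((‖deriv h z₀‖) ^ 2 : ℝ) ∧
    (‖deriv ((fun z => starRingEnd ℂ (h z)) ∘ (fun z => starRingEnd ℂ (h z))) z₀‖ = 1 →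
      deriv ((fun z => starRingEnd ℂ (h z)) ∘ (fun z => starRingEnd ℂ (h z))) z₀ = 1) := by
  set c := deriv h z₀ with hc
  have Hh : HasDerivAt h c z₀ := (hdiff.self_of_nhds).hasDerivAt
  have Hh' : HasDerivAt h c (starRingEnd ℂ (h z₀)) := by rw [hfix]; exact Hh
  have HF : HasDerivAt (fun z => starRingEnd ℂ (h (starRingEnd ℂ z))) (starRingEnd ℂ c)
      (h z₀) := conj_conj_hasDerivAt Hh'
  have Hcomp : HasDerivAt ((fun z => starRingEnd ℂ (h z)) ∘ (fun z => starRingEnd ℂ (h z)))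
      (starRingEnd ℂ c * c) z₀ := by
    have : ((fun z => starRingEnd ℂ (h z)) ∘ (fun z => starRingEnd ℂ (h z)))
        = (fun z => starRingEnd ℂ (h (starRingEnd ℂ z))) ∘ h := by
      funext z; simp [Function.comp]
    rw [this]
    exact HF.comp z₀ Hh
  have hderiv : deriv ((fun z => starRingEnd ℂ (h z)) ∘ (fun z => starRingEnd ℂ (h z))) z₀
      = ((‖c‖) ^ 2 : ℝ) := by
    rw [Hcomp.deriv]
    rw [mul_comm, Complex.mul_conj, ← Complex.sq_norm]
  refine ⟨Hcomp.differentiableAt, hderiv, fun habs => ?_⟩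
  rw [hderiv] at habs ⊢
  rw [Complex.norm_real, Real.norm_eq_abs, _root_.abs_of_nonneg (by positivity)] at habs
  rw [habs]; norm_num
end
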